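/- Suppose ψ₀(λ) = λ^{1+β} ℓ(λ) with ℓ(λ) ≥ C > 0 for all λ > 0 and β ∈ (0,1). Then for any bounded measurable ξ: [0,t] → ℝ with ξ(0) = 0, any solution v of ∂_s v(s) = e^{ξ(s)} ψ₀(v(s) e^{-ξ(s)}) on [0,t] with terminal value v(t) = λ satisfies v(0) ≤ (λ^{-β} + βC ∫_0^t e^{-βξ(u)} du)^{-1/β} ≤ (βC ∫_0^t e^{-βξ(u)} du)^{-1/β}. -/

import Mathlib

open MeasureTheory Set Real

/-- comparison of the cumulant with the explicit stable solution when
ψ₀(λ) = λ^{1+β} ℓ(λ) with ℓ ≥ C > 0. -/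
theorem cumulant_comparison_bound
    (β C t l : ℝ) (hβ : β ∈ Set.Ioo (0:ℝ) 1) (hC : 0 < C) (ht : 0 < t) (hl : 0 < l)
    (ψ₀ ℓ : ℝ → ℝ)
    (hψ : ∀ x : ℝ, 0 < x → ψ₀ x = x ^ (1 + β) * ℓ x)
    (hℓ : ∀ x : ℝ, 0 < x → C ≤ ℓ x)
    (ξ : ℝ → ℝ) (hξmeas : Measurable ξ) (M : ℝ) (hξbdd : ∀ u, |ξ u| ≤ M)
    (hξ0 : ξ 0 = 0)
    (v : ℝ → ℝ) (hv_pos : ∀ s ∈ Set.Icc 0 t, 0 < v s)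
    (hv_diff : ∀ s ∈ Set.Icc 0 t,
      HasDerivAt v (Real.exp (ξ s) * ψ₀ (v s * Real.exp (-ξ s))) s)
    (hvt : v t = l) :
    v 0 ≤ (l ^ (-β) + β * C * ∫ u in (0:ℝ)..t, Real.exp (-β * ξ u)) ^ (-1/β) ∧
    (l ^ (-β) + β * C * ∫ u in (0:ℝ)..t, Real.exp (-β * ξ u)) ^ (-1/β) ≤
      (β * C * ∫ u in (0:ℝ)..t, Real.exp (-β * ξ u)) ^ (-1/β) := by
  obtain ⟨hβ0, hβ1⟩ := hβ
  set φ : ℝ → ℝ := fun u => -(β * C * Real.exp (-β * ξ u)) with hφdef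
  -- integrability of φ on Icc 0 t
  have hφmeas : Measurable φ := (measurable_const.mul ((hξmeas.const_mul (-β)).exp)).neg
  have hφint : IntegrableOn φ (Icc 0 t) := by
    refine Integrable.mono' (g := fun _ => β * C * Real.exp (β * M))
      (integrableOn_const measure_Icc_lt_top.ne) hφmeas.aestronglyMeasurable ?_
    refine Filter.Eventually.of_forall fun u => ?_
    have h1 : -β * ξ u ≤ β * M := by
      have := (abs_le.1 (hξbdd u)).1
      nlinarith
    have : Real.exp (-β * ξ u) ≤ Real.exp (β * M) := Real.exp_le_exp.2 h1
    rw [hφdef]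
    simp only [norm_neg, Real.norm_eq_abs, abs_mul, abs_of_pos hβ0, abs_of_pos hC,
      abs_of_pos (Real.exp_pos _)]
    nlinarith [Real.exp_pos (-β * ξ u), mul_pos hβ0 hC]
  set g : ℝ → ℝ := fun s => v s ^ (-β) with hgdef
  set g' : ℝ → ℝ := fun s =>
    (Real.exp (ξ s) * ψ₀ (v s * Real.exp (-ξ s))) * (-β) * v s ^ (-β - 1) with hg'def
  have hcont : ContinuousOn g (Icc 0 t) := by
    refine ContinuousOn.rpow_const (fun s hs => (hv_diff s hs).continuousAt.continuousWithinAt)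
      fun s hs => Or.inl (hv_pos s hs).ne'
  have hderiv : ∀ x ∈ Ioo (0:ℝ) t, HasDerivWithinAt g (g' x) (Ioi x) x := by
    intro x hx
    have hx' : x ∈ Icc (0:ℝ) t := ⟨hx.1.le, hx.2.le⟩
    exact (((hv_diff x hx').rpow_const (Or.inl (hv_pos x hx').ne')).hasDerivWithinAt)
  have hφg : ∀ x ∈ Ioo (0:ℝ) t, g' x ≤ φ x := by
    intro x hx
    have hx' : x ∈ Icc (0:ℝ) t := ⟨hx.1.le, hx.2.le⟩
    have hvx : 0 < v x := hv_pos x hx'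
    have hex : (0:ℝ) < Real.exp (-ξ x) := Real.exp_pos _
    have harg : 0 < v x * Real.exp (-ξ x) := mul_pos hvx hex
    have hψx := hψ _ harg
    have hℓx := hℓ _ harg
    -- rewrite ψ₀ value
    rw [hg'def, hφdef]
    simp only
    rw [hψx]
    have hrw : (v x * Real.exp (-ξ x)) ^ (1 + β)
        = v x ^ (1 + β) * Real.exp (-(1 + β) * ξ x) := by
      rw [Real.mul_rpow hvx.le hex.le, ← Real.exp_log hex, ← Real.exp_mul, Real.log_exp]
      ring_nf
    rw [hrw]
    have hv1 : v x ^ (1 + β) * v x ^ (-β - 1) = 1 := by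
      rw [← Real.rpow_add hvx, show (1 + β + (-β - 1) : ℝ) = 0 by ring, Real.rpow_zero]
    have hexp1 : Real.exp (ξ x) * Real.exp (-(1 + β) * ξ x) = Real.exp (-β * ξ x) := by
      rw [← Real.exp_add]; ring_nf
    have key : Real.exp (ξ x) * (v x ^ (1 + β) * Real.exp (-(1 + β) * ξ x) * ℓ (v x * Real.exp (-ξ x))) * (-β) * v x ^ (-β - 1)
        = -(β * ℓ (v x * Real.exp (-ξ x)) * Real.exp (-β * ξ x)) := by
      have h2 : Real.exp (ξ x) * (v x ^ (1 + β) * Real.exp (-(1 + β) * ξ x) * ℓ (v x * Real.exp (-ξ x))) * (-β) * v x ^ (-β - 1)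
          = (Real.exp (ξ x) * Real.exp (-(1 + β) * ξ x)) * (v x ^ (1 + β) * v x ^ (-β - 1)) * ℓ (v x * Real.exp (-ξ x)) * (-β) := by
        ring
      rw [h2, hexp1, hv1]; ring
    rw [key]
    have hCle : β * C * Real.exp (-β * ξ x) ≤ β * ℓ (v x * Real.exp (-ξ x)) * Real.exp (-β * ξ x) :=
      mul_le_mul_of_nonneg_right (mul_le_mul_of_nonneg_left hℓx hβ0.le) (Real.exp_pos _).le
    linarith
  have hmain := intervalIntegral.sub_le_integral_of_hasDeriv_right_of_le ht.le hcont hderiv hφint hφg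
  -- compute the integral of φ
  have hφI : (∫ y in (0:ℝ)..t, φ y) = -(β * C * ∫ u in (0:ℝ)..t, Real.exp (-β * ξ u)) := by
    rw [hφdef]
    rw [intervalIntegral.integral_neg, intervalIntegral.integral_const_mul]
  rw [hφI] at hmain
  set I := ∫ u in (0:ℝ)..t, Real.exp (-β * ξ u) with hI
  have hIint : IntervalIntegrable (fun u => Real.exp (-β * ξ u)) volume 0 t := by
    rw [intervalIntegrable_iff_integrableOn_Icc_of_le ht.le]
    have : IntegrableOn (fun u => -(φ u)) (Icc 0 t) := hφint.neg
    have heq : (fun u => Real.exp (-β * ξ u)) = fun u => (1 / (β * C)) * (-(φ u)) := by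
      funext u
      rw [hφdef]
      field_simp
    rw [heq]
    exact this.const_mul _
  have hIpos : 0 < I := intervalIntegral.intervalIntegral_pos_of_pos hIint
    (fun u => Real.exp_pos _) ht
  have hBCI : 0 < β * C * I := by positivity
  have hg0 : g 0 = v 0 ^ (-β) := rfl
  have hgt : g t = l ^ (-β) := by rw [hgdef]; simp [hvt]
  rw [hg0, hgt] at hmain
  -- hmain : l ^ (-β) - v 0 ^ (-β) ≤ -(β * C * I)
  have hkey : l ^ (-β) + β * C * I ≤ v 0 ^ (-β) := by linarith
  have hApos : 0 < l ^ (-β) + β * C * I := by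
    have := Real.rpow_pos_of_pos hl (-β)
    linarith
  have hv0 : 0 < v 0 := hv_pos 0 ⟨le_refl 0, ht.le⟩
  have hzneg : (-1/β : ℝ) ≤ 0 := by
    rw [neg_div]
    exact neg_nonpos.2 (by positivity)
  constructor
  · have h1 : (v 0 ^ (-β)) ^ (-1/β) ≤ (l ^ (-β) + β * C * I) ^ (-1/β) :=
      Real.rpow_le_rpow_of_nonpos hApos hkey hzneg
    have h2 : (v 0 ^ (-β)) ^ (-1/β) = v 0 := by
      rw [← Real.rpow_mul hv0.le]
      rw [show (-β) * (-1/β) = 1 by field_simp]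
      exact Real.rpow_one _
    linarith [h1, h2.symm.le]
  · refine Real.rpow_le_rpow_of_nonpos hBCI ?_ hzneg
    have := Real.rpow_pos_of_pos hl (-β)
    linarith
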